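/- Suppose W is diagonalizable over ℂ: there exist linearly independent row vectors v_1, …, v_N ∈ ℂ^{1×N} and λ_1, …, λ_N ∈ ℂ with v_i·W = λ_i·v_i for all i, and suppose E_{λ_i} is invertible for every i. Then the networked sampled-data system (Φ_s, Ψ_s) is controllable if and only if the following three conditions hold: (1) the pair (W, Δ) satisfies the PBH condition; (2) for every i = 1, …, N the pair (E_{λ_i}, 𝓑(h)) satisfies the PBH condition; (3) for every θ ∈ ℂ and every family of row vectors ξ_1, …, ξ_N ∈ ℂ^{1×n} with ξ_i·(θI − E_{λ_i}) = 0 for all i and not all ξ_i zero, one has (Σ_{i=1}^{N} v_i ⊗ ξ_i)·(Δ ⊗ 𝓑(h)) ≠ 0. -/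

import Mathlib

open Matrix
open scoped Kronecker

/-- Entrywise complexification of a real matrix. -/
noncomputable def cpx {a b : Type*} (M : Matrix a b ℝ) : Matrix a b ℂ :=
  M.map (Complex.ofReal)

/-- The matrix exponential `e^{M}`. -/
noncomputable def mexp {q : Type*} [Fintype q] [DecidableEq q]
    (M : Matrix q q ℝ) : Matrix q q ℝ :=
  NormedSpace.exp M

/-- The entrywise integral `∫₀ʰ e^{Aτ} dτ`. -/
noncomputable def intExp {q : Type*} [Fintype q] [DecidableEq q]
    (A : Matrix q q ℝ) (h : ℝ) : Matrix q q ℝ :=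
  Matrix.of fun i j => ∫ τ in (0:ℝ)..h, (NormedSpace.exp (τ • A)) i j

/-- `θ` is an eigenvalue of the complex square matrix `M`. -/
def IsEig {q : Type*} [Fintype q] [DecidableEq q] (M : Matrix q q ℂ) (θ : ℂ) : Prop :=
  (θ • (1 : Matrix q q ℂ) - M).det = 0

/-- PBH condition for a pair of complex matrices: for every `s ∈ ℂ`, the only row
vector `v` with `v (sI - M) = 0` and `v G = 0` is `v = 0`. -/
def PBH {q r : Type*} [Fintype q] [DecidableEq q] [Fintype r]
    (M : Matrix q q ℂ) (G : Matrix q r ℂ) : Prop :=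
  ∀ (s : ℂ) (v : q → ℂ), v ᵥ* (s • (1 : Matrix q q ℂ) - M) = 0 → v ᵥ* G = 0 → v = 0

/-- Controllability of a discrete-time linear system `x⁺ = F x + G u`:
every state can be steered to the origin in finitely many steps. -/
def Controllable {q r : Type*} [Fintype q] [DecidableEq q] [Fintype r]
    (F : Matrix q q ℝ) (G : Matrix q r ℝ) : Prop :=
  ∀ x : q → ℝ, ∃ (k : ℕ) (u : Fin k → r → ℝ),
    (F ^ k) *ᵥ x + ∑ j : Fin k, (F ^ (k - 1 - (j : ℕ))) *ᵥ (G *ᵥ u j) = 0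

/-- `𝓑(h) = (∫₀ʰ e^{Aτ} dτ)·B`. -/
noncomputable def sampB {n p : ℕ} (A : Matrix (Fin n) (Fin n) ℝ)
    (B : Matrix (Fin n) (Fin p) ℝ) (h : ℝ) : Matrix (Fin n) (Fin p) ℝ :=
  intExp A h * B

/-- `𝓗(h) = (∫₀ʰ e^{Aτ} dτ)·H·C`. -/
noncomputable def sampH {n m : ℕ} (A : Matrix (Fin n) (Fin n) ℝ)
    (H : Matrix (Fin n) (Fin m) ℝ) (C : Matrix (Fin m) (Fin n) ℝ) (h : ℝ) :
    Matrix (Fin n) (Fin n) ℝ :=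
  intExp A h * H * C

/-- `Φ_s = I_N ⊗ e^{Ah} + W ⊗ 𝓗(h)`. -/
noncomputable def Phis {n m N : ℕ} (A : Matrix (Fin n) (Fin n) ℝ)
    (H : Matrix (Fin n) (Fin m) ℝ) (C : Matrix (Fin m) (Fin n) ℝ)
    (W : Matrix (Fin N) (Fin N) ℝ) (h : ℝ) :
    Matrix (Fin N × Fin n) (Fin N × Fin n) ℝ :=
  (1 : Matrix (Fin N) (Fin N) ℝ) ⊗ₖ mexp (h • A) + W ⊗ₖ sampH A H C h

/-- `E_λ = e^{Ah} + λ·𝓗(h)` (complexified). -/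
noncomputable def Emat {n m : ℕ} (A : Matrix (Fin n) (Fin n) ℝ)
    (H : Matrix (Fin n) (Fin m) ℝ) (C : Matrix (Fin m) (Fin n) ℝ)
    (h : ℝ) (lam : ℂ) : Matrix (Fin n) (Fin n) ℂ :=
  cpx (mexp (h • A)) + lam • cpx (sampH A H C h)

/-! ### Auxiliary lemmas -/

section VecMulHelpers

variable {α : Type*} [CommRing α]

lemma vecMul_smulMat {a b : Type*} [Fintype a] (w : a → α) (c : α) (M : Matrix a b α) :
    w ᵥ* (c • M) = c • (w ᵥ* M) := by
  ext j
  simp only [Matrix.vecMul, dotProduct, Matrix.smul_apply, Pi.smul_apply, smul_eq_mul,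
    Finset.mul_sum]
  exact Finset.sum_congr rfl fun i _ => by ring

lemma sum_vecMul' {a b ι : Type*} [Fintype a] (s : Finset ι) (f : ι → a → α)
    (M : Matrix a b α) : (∑ i ∈ s, f i) ᵥ* M = ∑ i ∈ s, f i ᵥ* M := by
  have := map_sum M.vecMulLinear f s
  simp only [Matrix.vecMulLinear_apply] at this
  exact this

end VecMulHelpers

/-! ### Complexification lemmas -/

section Cpx

variable {a b c : Type*}

lemma cpx_mul [Fintype b] (M : Matrix a b ℝ) (P : Matrix b c ℝ) :
    cpx (M * P) = cpx M * cpx P := by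
  ext i j
  simp [cpx, Matrix.mul_apply]

lemma cpx_one [Fintype a] [DecidableEq a] : cpx (1 : Matrix a a ℝ) = 1 := by
  ext i j
  simp [cpx, Matrix.one_apply, apply_ite]

lemma cpx_pow [Fintype a] [DecidableEq a] (M : Matrix a a ℝ) (k : ℕ) :
    cpx (M ^ k) = cpx M ^ k := by
  induction k with
  | zero => simpa using cpx_one
  | succ k ih => rw [pow_succ, cpx_mul, ih, pow_succ]

lemma cpx_vecMul [Fintype a] (w : a → ℝ) (M : Matrix a b ℝ) (j : b) :
    ((fun i => (w i : ℂ)) ᵥ* cpx M) j = ((w ᵥ* M) j : ℂ) := by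
  simp [Matrix.vecMul, dotProduct, cpx]

end Cpx

/-! ### Hautus lemma -/

section Hautus

variable {q r : Type*} [Fintype q] [DecidableEq q] [Fintype r]

/-- The controllability subspace. -/
noncomputable def ctrlS (F : Matrix q q ℝ) (G : Matrix q r ℝ) : Submodule ℝ (q → ℝ) :=
  Submodule.span ℝ {x | ∃ (i : ℕ) (u : r → ℝ), x = (F ^ i * G) *ᵥ u}

lemma controllable_iff_ctrlS_top (F : Matrix q q ℝ) (G : Matrix q r ℝ) (hF : IsUnit F) :
    Controllable F G ↔ ctrlS F G = ⊤ := by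
  have hFinj : Function.Injective (F.mulVec) := by
    have := Matrix.mulVec_injective_iff_isUnit.mpr hF
    exact this
  constructor
  · intro hc
    -- the span is mapped onto itself by F
    have hmaple : (ctrlS F G).map (Matrix.mulVecLin F) ≤ ctrlS F G := by
      rw [Submodule.map_le_iff_le_comap, ctrlS, Submodule.span_le]
      rintro x ⟨i, u, rfl⟩
      simp only [SetLike.mem_coe, Submodule.mem_comap, Matrix.mulVecLin_apply]
      apply Submodule.subset_span
      refine ⟨i + 1, u, ?_⟩
      rw [Matrix.mulVec_mulVec, pow_succ', Matrix.mul_assoc]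
    have hFe : ∃ e : (q → ℝ) ≃ₗ[ℝ] (q → ℝ), (e : (q → ℝ) →ₗ[ℝ] (q → ℝ)) =
        Matrix.mulVecLin F := by
      have hdet : IsUnit F.det := (Matrix.isUnit_iff_isUnit_det F).mp hF
      refine ⟨LinearEquiv.ofLinear (Matrix.mulVecLin F) (Matrix.mulVecLin F⁻¹) ?_ ?_, rfl⟩
      · apply LinearMap.ext; intro x
        simp [Matrix.mulVec_mulVec, Matrix.mul_nonsing_inv F hdet]
      · apply LinearMap.ext; intro x
        simp [Matrix.mulVec_mulVec, Matrix.nonsing_inv_mul F hdet]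
    obtain ⟨e, he⟩ := hFe
    have hmapeq : (ctrlS F G).map (Matrix.mulVecLin F) = ctrlS F G := by
      apply Submodule.eq_of_le_of_finrank_le hmaple
      rw [← he, LinearEquiv.finrank_map_eq e]
    have step : ∀ y : q → ℝ, F *ᵥ y ∈ ctrlS F G → y ∈ ctrlS F G := by
      intro y hy
      rw [← hmapeq] at hy
      obtain ⟨z, hz, hzy⟩ := hy
      simp only [Matrix.mulVecLin_apply] at hzy
      have : z = y := hFinj hzy
      rwa [← this]
    have steps : ∀ (k : ℕ) (y : q → ℝ), F ^ k *ᵥ y ∈ ctrlS F G → y ∈ ctrlS F G := by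
      intro k
      induction k with
      | zero => intro y hy; simpa using hy
      | succ k ih =>
        intro y hy
        rw [pow_succ, ← Matrix.mulVec_mulVec] at hy
        exact step y (ih _ hy)
    rw [Submodule.eq_top_iff']
    intro x
    obtain ⟨k, u, hu⟩ := hc x
    apply steps k
    have : F ^ k *ᵥ x = -∑ j : Fin k, F ^ (k - 1 - (j : ℕ)) *ᵥ (G *ᵥ u j) := by
      rw [eq_neg_iff_add_eq_zero]; exact hu
    rw [this]
    apply Submodule.neg_mem
    apply Submodule.sum_mem
    intro j _
    rw [Matrix.mulVec_mulVec]
    exact Submodule.subset_span ⟨k - 1 - (j : ℕ), u j, rfl⟩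
  · intro htop
    -- the truncated controllability subspaces
    set Sk : ℕ →o Submodule ℝ (q → ℝ) :=
      ⟨fun k => Submodule.span ℝ {x | ∃ i < k, ∃ u : r → ℝ, x = (F ^ i * G) *ᵥ u}, by
        intro k l hkl
        apply Submodule.span_mono
        rintro x ⟨i, hi, u, rfl⟩
        exact ⟨i, lt_of_lt_of_le hi hkl, u, rfl⟩⟩ with hSk
    obtain ⟨k0, hk0⟩ := monotone_stabilizes_iff_noetherian.mpr inferInstance Sk
    have hSle : ctrlS F G ≤ Sk k0 := by
      rw [ctrlS, Submodule.span_le]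
      rintro x ⟨i, u, rfl⟩
      have h1 : (F ^ i * G) *ᵥ u ∈ Sk (max (i + 1) k0) :=
        Submodule.subset_span ⟨i, lt_of_lt_of_le (Nat.lt_succ_self i) (le_max_left _ _), u, rfl⟩
      rw [← hk0 (max (i + 1) k0) (le_max_right _ _)] at h1
      exact h1
    have hSkTop : ∀ l, k0 ≤ l → Sk l = ⊤ := by
      intro l hl
      rw [← hk0 l hl]
      exact le_antisymm le_top (htop ▸ hSle)
    intro x
    set k := k0 + 1 with hk
    refine ⟨k, ?_⟩
    -- the reachability map
    set L : (Fin k → (r → ℝ)) →ₗ[ℝ] (q → ℝ) :=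
      { toFun := fun u => ∑ j : Fin k, (F ^ (k - 1 - (j : ℕ)) * G) *ᵥ u j
        map_add' := fun u u' => by
          simp [Matrix.mulVec_add, Finset.sum_add_distrib]
        map_smul' := fun c u => by
          simp [Matrix.mulVec_smul, Finset.smul_sum] } with hL
    have hrange : Sk k ≤ LinearMap.range L := by
      simp only [hSk, OrderHom.coe_mk]
      show Submodule.span ℝ _ ≤ _
      rw [Submodule.span_le]
      rintro x ⟨i, hi, u0, rfl⟩
      have hik : i ≤ k - 1 := Nat.le_sub_one_of_lt hi
      have hj0lt : k - 1 - i < k := by omega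
      refine ⟨fun j => if j = ⟨k - 1 - i, hj0lt⟩ then u0 else 0, ?_⟩
      simp only [hL, LinearMap.coe_mk, AddHom.coe_mk]
      rw [Finset.sum_eq_single (⟨k - 1 - i, hj0lt⟩ : Fin k)]
      · rw [if_pos rfl]
        show (F ^ (k - 1 - (k - 1 - i)) * G) *ᵥ u0 = _
        have hkk : k - 1 - (k - 1 - i) = i := by omega
        rw [hkk]
      · intro j _ hj
        rw [if_neg hj, Matrix.mulVec_zero]
      · intro hmem
        exact absurd (Finset.mem_univ _) hmem
    have hx : -(F ^ k *ᵥ x) ∈ LinearMap.range L := by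
      apply hrange
      rw [hSkTop k (Nat.le_succ k0)]
      trivial
    obtain ⟨u, hu⟩ := hx
    refine ⟨u, ?_⟩
    have : ∑ j : Fin k, F ^ (k - 1 - (j : ℕ)) *ᵥ (G *ᵥ u j) = -(F ^ k *ᵥ x) := by
      rw [← hu]
      exact Finset.sum_congr rfl fun j _ => by rw [Matrix.mulVec_mulVec]
    rw [this, add_neg_cancel]

end Hautus

section Hautus2

variable {q r : Type*} [Fintype q] [DecidableEq q] [Fintype r] [DecidableEq r]

lemma ctrlS_top_iff_ann (F : Matrix q q ℝ) (G : Matrix q r ℝ) :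
    ctrlS F G = ⊤ ↔ ∀ w : q → ℝ, (∀ i : ℕ, w ᵥ* (F ^ i * G) = 0) → w = 0 := by
  constructor
  · intro htop w hw
    set φ : (q → ℝ) →ₗ[ℝ] ℝ :=
      { toFun := fun y => w ⬝ᵥ y
        map_add' := fun y z => dotProduct_add w y z
        map_smul' := fun c y => by simp [dotProduct_smul] } with hφ
    have hker : ctrlS F G ≤ LinearMap.ker φ := by
      rw [ctrlS, Submodule.span_le]
      rintro x ⟨i, u, rfl⟩
      simp only [SetLike.mem_coe, LinearMap.mem_ker, hφ, LinearMap.coe_mk, AddHom.coe_mk]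
      rw [Matrix.dotProduct_mulVec, hw i, zero_dotProduct]
    have : φ w = 0 := by
      have := hker (htop ▸ Submodule.mem_top (x := w))
      simpa using this
    have hww : w ⬝ᵥ w = 0 := this
    exact dotProduct_self_eq_zero.mp hww
  · intro hann
    rw [Submodule.eq_top_iff']
    intro x
    rw [← Subspace.forall_mem_dualAnnihilator_apply_eq_zero_iff]
    intro φ hφ
    set w : q → ℝ := fun i => φ (fun j => if i = j then 1 else 0) with hwdef
    have hφw : ∀ y, φ y = w ⬝ᵥ y := by
      intro y
      rw [LinearMap.pi_apply_eq_sum_univ φ y]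
      simp only [dotProduct, hwdef, smul_eq_mul]
      exact Finset.sum_congr rfl fun i _ => by ring
    have hwann : ∀ i : ℕ, w ᵥ* (F ^ i * G) = 0 := by
      intro i
      funext j
      have hcol : (fun l => (F ^ i * G) l j) = (F ^ i * G) *ᵥ (fun l => if l = j then 1 else 0) := by
        funext l
        simp [Matrix.mulVec, dotProduct]
      have hmem : (fun l => (F ^ i * G) l j) ∈ ctrlS F G := by
        rw [hcol]
        exact Submodule.subset_span ⟨i, _, rfl⟩
      have hzero : φ (fun l => (F ^ i * G) l j) = 0 :=
        (Submodule.mem_dualAnnihilator φ).mp hφ _ hmem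
      rw [hφw] at hzero
      simpa [Matrix.vecMul, dotProduct] using hzero
    have : w = 0 := hann w hwann
    rw [hφw, this, zero_dotProduct]

lemma ann_real_iff_complex (F : Matrix q q ℝ) (G : Matrix q r ℝ) :
    (∀ w : q → ℝ, (∀ i : ℕ, w ᵥ* (F ^ i * G) = 0) → w = 0) ↔
      (∀ w : q → ℂ, (∀ i : ℕ, w ᵥ* (cpx F ^ i * cpx G) = 0) → w = 0) := by
  have hc : ∀ i : ℕ, cpx F ^ i * cpx G = cpx (F ^ i * G) := by
    intro i; rw [cpx_mul, cpx_pow]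
  constructor
  · intro hr w hw
    set wre : q → ℝ := fun i => (w i).re with hre
    set wim : q → ℝ := fun i => (w i).im with him
    have hsplit : ∀ (M : Matrix q r ℝ) (j : r), (w ᵥ* cpx M) j =
        Complex.mk ((wre ᵥ* M) j) ((wim ᵥ* M) j) := by
      intro M j
      simp only [Matrix.vecMul, dotProduct, cpx, Matrix.map_apply]
      rw [Complex.ext_iff]
      constructor
      · simp [Complex.re_sum, hre]
      · simp [Complex.im_sum, him]
    have hre0 : wre = 0 := by
      apply hr
      intro i
      funext j
      have := congrArg Complex.re (congrFun (hw i) j)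
      rw [hc i, hsplit (F ^ i * G) j] at this
      simpa using this
    have him0 : wim = 0 := by
      apply hr
      intro i
      funext j
      have := congrArg Complex.im (congrFun (hw i) j)
      rw [hc i, hsplit (F ^ i * G) j] at this
      simpa using this
    funext i
    have h1 : (w i).re = 0 := congrFun hre0 i
    have h2 : (w i).im = 0 := congrFun him0 i
    exact Complex.ext h1 h2
  · intro hcplx w hw
    have : (fun i => (w i : ℂ)) = 0 := by
      apply hcplx
      intro i
      funext j
      rw [hc i, cpx_vecMul, hw i]
      simp
    funext i
    have h2 := congrFun this i
    simp only [Pi.zero_apply] at h2 ⊢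
    exact_mod_cast h2

lemma ann_iff_pbh (Fc : Matrix q q ℂ) (Gc : Matrix q r ℂ) :
    (∀ w : q → ℂ, (∀ i : ℕ, w ᵥ* (Fc ^ i * Gc) = 0) → w = 0) ↔ PBH Fc Gc := by
  constructor
  · intro hann s w h1 h2
    have hsw : w ᵥ* Fc = s • w := by
      have := congrArg (fun z => z + w ᵥ* Fc) h1
      simpa [Matrix.vecMul_sub, vecMul_smulMat, Matrix.vecMul_one, sub_add_cancel] using this.symm
    apply hann
    intro i
    have hpow : w ᵥ* Fc ^ i = s ^ i • w := by
      induction i with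
      | zero => simp [Matrix.vecMul_one]
      | succ i ih =>
        rw [pow_succ, ← Matrix.vecMul_vecMul, ih, Matrix.smul_vecMul, hsw, pow_succ,
          smul_smul, mul_comm]
    rw [← Matrix.vecMul_vecMul, hpow, Matrix.smul_vecMul, h2, smul_zero]
  · intro hpbh
    by_contra hcon
    push_neg at hcon
    obtain ⟨w0, hw0ann, hw0ne⟩ := hcon
    set V : Submodule ℂ (q → ℂ) :=
      { carrier := {w | ∀ i : ℕ, w ᵥ* (Fc ^ i * Gc) = 0}
        add_mem' := fun ha hb i => by rw [Matrix.add_vecMul, ha i, hb i, add_zero]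
        zero_mem' := fun i => Matrix.zero_vecMul _
        smul_mem' := fun c w hw i => by rw [Matrix.smul_vecMul, hw i, smul_zero] } with hV
    have hw0V : w0 ∈ V := hw0ann
    haveI : Nontrivial V := by
      refine ⟨⟨⟨w0, hw0V⟩, 0, ?_⟩⟩
      simp [Subtype.ext_iff, hw0ne]
    have hmaps : ∀ w ∈ V, Fc.vecMulLinear w ∈ V := by
      intro w hw i
      simp only [Matrix.vecMulLinear_apply]
      rw [Matrix.vecMul_vecMul, ← Matrix.mul_assoc, ← pow_succ']
      exact hw (i + 1)
    set L : V →ₗ[ℂ] V := (Matrix.vecMulLinear Fc).restrict hmaps with hLdef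
    obtain ⟨μ, hμ⟩ := Module.End.exists_eigenvalue L
    obtain ⟨xv, hxvec⟩ := hμ.exists_hasEigenvector
    set x : q → ℂ := (xv : q → ℂ) with hxdef
    have hxne' : x ≠ 0 := by
      intro hx
      exact hxvec.2 (Subtype.ext hx)
    have hxV : x ∈ V := xv.2
    have hxev : x ᵥ* Fc = μ • x := by
      have := congrArg (Subtype.val) hxvec.apply_eq_smul
      simpa [hLdef, LinearMap.restrict_apply, hxdef] using this
    have h1 : x ᵥ* (μ • (1 : Matrix q q ℂ) - Fc) = 0 := by
      rw [Matrix.vecMul_sub, vecMul_smulMat, Matrix.vecMul_one, hxev, sub_self]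
    have h2 : x ᵥ* Gc = 0 := by
      have := hxV 0
      simpa using this
    exact hxne' (hpbh μ x h1 h2)

/-- The discrete-time Hautus test: for an invertible `F`, null-controllability of `(F, G)`
is equivalent to the PBH condition for the complexified pair. -/
lemma hautus (F : Matrix q q ℝ) (G : Matrix q r ℝ) (hF : IsUnit F) :
    Controllable F G ↔ PBH (cpx F) (cpx G) := by
  rw [controllable_iff_ctrlS_top F G hF, ctrlS_top_iff_ann, ann_real_iff_complex,
    ann_iff_pbh]

end Hautus2

/-! ### Kronecker and complexification helpers for the main theorem -/

section KronHelpers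

lemma cpx_add {a b : Type*} (M P : Matrix a b ℝ) : cpx (M + P) = cpx M + cpx P := by
  ext i j
  simp [cpx]

lemma cpx_kron {a b c d : Type*} (P : Matrix a b ℝ) (Q : Matrix c d ℝ) :
    cpx (P ⊗ₖ Q) = cpx P ⊗ₖ cpx Q := by
  ext ia jb
  simp [cpx, Matrix.kroneckerMap_apply]

lemma vecMul_kron {a b c d : Type*} [Fintype a] [Fintype b]
    (u : a → ℂ) (ξ : b → ℂ) (P : Matrix a c ℂ) (Q : Matrix b d ℂ) :
    (fun q : a × b => u q.1 * ξ q.2) ᵥ* (P ⊗ₖ Q) =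
      fun q : c × d => (u ᵥ* P) q.1 * (ξ ᵥ* Q) q.2 := by
  funext q
  obtain ⟨j, bb⟩ := q
  simp only [Matrix.vecMul, dotProduct, Matrix.kroneckerMap_apply,
    Fintype.sum_prod_type]
  rw [Finset.sum_mul_sum]
  exact Finset.sum_congr rfl fun i _ => Finset.sum_congr rfl fun a _ => by ring

end KronHelpers

section Main

variable {n m N : ℕ}
variable (A : Matrix (Fin n) (Fin n) ℝ) (H : Matrix (Fin n) (Fin m) ℝ)
variable (C : Matrix (Fin m) (Fin n) ℝ) (W : Matrix (Fin N) (Fin N) ℝ) (h : ℝ)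
variable (v : Fin N → Fin N → ℂ) (lam : Fin N → ℂ)

lemma cpx_Phis :
    cpx (Phis A H C W h) =
      (1 : Matrix (Fin N) (Fin N) ℂ) ⊗ₖ cpx (mexp (h • A)) + cpx W ⊗ₖ cpx (sampH A H C h) := by
  rw [Phis, cpx_add, cpx_kron, cpx_kron, cpx_one]

lemma single_row_vecMul_phi (hev : ∀ i, v i ᵥ* cpx W = lam i • v i)
    (k : Fin N) (ξ : Fin n → ℂ) :
    (fun q : Fin N × Fin n => v k q.1 * ξ q.2) ᵥ* cpx (Phis A H C W h) =
      fun q : Fin N × Fin n => v k q.1 * (ξ ᵥ* Emat A H C h (lam k)) q.2 := by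
  rw [cpx_Phis, Matrix.vecMul_add, vecMul_kron, vecMul_kron, Matrix.vecMul_one, hev k]
  funext q
  simp only [Emat, Matrix.vecMul_add, vecMul_smulMat, Pi.add_apply, Pi.smul_apply, smul_eq_mul]
  ring

lemma key_vecMul (hev : ∀ i, v i ᵥ* cpx W = lam i • v i)
    (θ : ℂ) (ξ : Fin N → Fin n → ℂ) :
    (fun q : Fin N × Fin n => ∑ k, v k q.1 * ξ k q.2) ᵥ*
        (θ • (1 : Matrix (Fin N × Fin n) (Fin N × Fin n) ℂ) - cpx (Phis A H C W h)) =
      fun q : Fin N × Fin n =>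
        ∑ k, v k q.1 * (ξ k ᵥ* (θ • (1 : Matrix (Fin n) (Fin n) ℂ) - Emat A H C h (lam k))) q.2 := by
  have hz : (fun q : Fin N × Fin n => ∑ k, v k q.1 * ξ k q.2) =
      ∑ k, (fun q : Fin N × Fin n => v k q.1 * ξ k q.2) := by
    funext q
    simp
  rw [Matrix.vecMul_sub, vecMul_smulMat, Matrix.vecMul_one, hz, sum_vecMul']
  simp only [single_row_vecMul_phi A H C W h v lam hev]
  funext q
  simp only [Pi.sub_apply, Pi.smul_apply, Finset.sum_apply, smul_eq_mul,
    Matrix.vecMul_sub, vecMul_smulMat, Matrix.vecMul_one]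
  rw [Finset.mul_sum, ← Finset.sum_sub_distrib]
  exact Finset.sum_congr rfl fun k _ => by ring

lemma indep_coords (hvli : LinearIndependent ℂ v) {η : Fin N → Fin n → ℂ}
    (hz : (fun q : Fin N × Fin n => ∑ k, v k q.1 * η k q.2) = 0) : ∀ k, η k = 0 := by
  intro k
  funext a
  have h1 : ∑ k, η k a • v k = 0 := by
    funext i
    have h2 := congrFun hz (i, a)
    simpa [Finset.sum_apply, mul_comm] using h2
  exact Fintype.linearIndependent_iff.mp hvli (fun k => η k a) h1 k

lemma exists_decomp (hN : 0 < N) (hvli : LinearIndependent ℂ v) (z : Fin N × Fin n → ℂ) :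
    ∃ ξ : Fin N → Fin n → ℂ, z = fun q => ∑ k, v k q.1 * ξ k q.2 := by
  haveI : Nonempty (Fin N) := ⟨⟨0, hN⟩⟩
  have hcard : Fintype.card (Fin N) = Module.finrank ℂ (Fin N → ℂ) := by
    simp [Module.finrank_pi]
  let b := basisOfLinearIndependentOfCardEqFinrank hvli hcard
  have hbv : ⇑b = v := coe_basisOfLinearIndependentOfCardEqFinrank hvli hcard
  refine ⟨fun k a => b.repr (fun i => z (i, a)) k, ?_⟩
  funext q
  obtain ⟨i, a⟩ := q
  have h2 := congrFun (b.sum_repr (fun i' => z (i', a))) i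
  simp only [Finset.sum_apply, Pi.smul_apply, smul_eq_mul, hbv] at h2
  rw [← h2]
  exact Finset.sum_congr rfl fun k _ => (mul_comm _ _)

lemma exists_left_eig {nn : ℕ} (hn : 0 < nn) (M : Matrix (Fin nn) (Fin nn) ℂ) :
    ∃ (θ : ℂ) (ξ : Fin nn → ℂ), ξ ≠ 0 ∧
      ξ ᵥ* (θ • (1 : Matrix (Fin nn) (Fin nn) ℂ) - M) = 0 := by
  haveI : Nonempty (Fin nn) := ⟨⟨0, hn⟩⟩
  obtain ⟨μ, hμ⟩ := Module.End.exists_eigenvalue (Matrix.vecMulLinear M)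
  obtain ⟨ξ, hvec⟩ := hμ.exists_hasEigenvector
  refine ⟨μ, ξ, hvec.2, ?_⟩
  have h1 : ξ ᵥ* M = μ • ξ := by simpa using hvec.apply_eq_smul
  rw [Matrix.vecMul_sub, vecMul_smulMat, Matrix.vecMul_one, h1, sub_self]

lemma isUnit_Phis (hn : 0 < n) (hN : 0 < N)
    (hvli : LinearIndependent ℂ v) (hev : ∀ i, v i ᵥ* cpx W = lam i • v i)
    (hE : ∀ i, IsUnit (Emat A H C h (lam i))) :
    IsUnit (Phis A H C W h) := by
  have hcs : Function.Surjective (Matrix.vecMul (α := ℂ) · (cpx (Phis A H C W h))) := by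
    intro y
    obtain ⟨ξ, hy⟩ := exists_decomp v hN hvli y
    choose ξ' hξ' using fun k => (Matrix.vecMul_surjective_iff_isUnit.mpr (hE k)) (ξ k)
    refine ⟨fun q => ∑ k, v k q.1 * ξ' k q.2, ?_⟩
    have hz : (fun q : Fin N × Fin n => ∑ k, v k q.1 * ξ' k q.2) =
        ∑ k, (fun q : Fin N × Fin n => v k q.1 * ξ' k q.2) := by
      funext q
      simp
    show (fun q : Fin N × Fin n => ∑ k, v k q.1 * ξ' k q.2) ᵥ* cpx (Phis A H C W h) = y
    rw [hz, sum_vecMul']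
    simp only [single_row_vecMul_phi A H C W h v lam hev]
    rw [hy]
    funext q
    simp only [Finset.sum_apply]
    refine Finset.sum_congr rfl fun k _ => ?_
    exact congrArg (v k q.1 * ·) (congrFun (hξ' k) q.2)
  have hcu : IsUnit (cpx (Phis A H C W h)) := Matrix.vecMul_surjective_iff_isUnit.mp hcs
  rw [Matrix.isUnit_iff_isUnit_det] at hcu ⊢
  have hdet : (cpx (Phis A H C W h)).det = ((Phis A H C W h).det : ℂ) :=
    (RingHom.map_det Complex.ofRealHom _).symm
  rw [hdet, isUnit_iff_ne_zero] at hcu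
  rw [isUnit_iff_ne_zero]
  exact fun h0 => hcu (by rw [h0, Complex.ofReal_zero])

end Main

section MainKey

variable {n m N : ℕ}
variable (A : Matrix (Fin n) (Fin n) ℝ) (H : Matrix (Fin n) (Fin m) ℝ)
variable (C : Matrix (Fin m) (Fin n) ℝ) (W : Matrix (Fin N) (Fin N) ℝ) (h : ℝ)
variable (v : Fin N → Fin N → ℂ) (lam : Fin N → ℂ)

lemma key_vecMul0 (hev : ∀ i, v i ᵥ* cpx W = lam i • v i) (θ : ℂ)
    (z : Fin N × Fin n → ℂ) (ξ : Fin N → Fin n → ℂ)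
    (hzd : ∀ q, z q = ∑ k, v k q.1 * ξ k q.2)
    (hfam : ∀ k, ξ k ᵥ* (θ • (1 : Matrix (Fin n) (Fin n) ℂ) - Emat A H C h (lam k)) = 0) :
    z ᵥ* (θ • (1 : Matrix (Fin N × Fin n) (Fin N × Fin n) ℂ) - cpx (Phis A H C W h)) = 0 := by
  have hz : z = fun q => ∑ k, v k q.1 * ξ k q.2 := funext hzd
  rw [hz, key_vecMul A H C W h v lam hev θ ξ]
  funext q
  simp [hfam]

end MainKey
theorem stmt5
    (n m p N : ℕ) (hn : 0 < n) (hm : 0 < m) (hp : 0 < p) (hN : 0 < N)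
    (h : ℝ) (hh : 0 < h)
    (A : Matrix (Fin n) (Fin n) ℝ) (B : Matrix (Fin n) (Fin p) ℝ)
    (C : Matrix (Fin m) (Fin n) ℝ) (H : Matrix (Fin n) (Fin m) ℝ)
    (W : Matrix (Fin N) (Fin N) ℝ)
    (δ : Fin N → ℝ) (hδ : ∀ i, δ i = 0 ∨ δ i = 1)
    (v : Fin N → Fin N → ℂ) (lam : Fin N → ℂ)
    (hvli : LinearIndependent ℂ v)
    (hev : ∀ i, v i ᵥ* cpx W = lam i • v i)
    (hE : ∀ i, IsUnit (Emat A H C h (lam i))) :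
    Controllable (Phis A H C W h) (Matrix.diagonal δ ⊗ₖ sampB A B h) ↔
      (PBH (cpx W) (cpx (Matrix.diagonal δ)) ∧
        (∀ i, PBH (Emat A H C h (lam i)) (cpx (sampB A B h))) ∧
        (∀ θ : ℂ, ∀ ξ : Fin N → Fin n → ℂ,
          (∀ i, ξ i ᵥ* (θ • (1 : Matrix (Fin n) (Fin n) ℂ) - Emat A H C h (lam i)) = 0) →
          (∃ i, ξ i ≠ 0) →
          (fun q : Fin N × Fin n => ∑ i, v i q.1 * ξ i q.2) ᵥ*
            cpx (Matrix.diagonal δ ⊗ₖ sampB A B h) ≠ 0)) := by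
  have hPhiUnit : IsUnit (Phis A H C W h) :=
    isUnit_Phis A H C W h v lam hn hN hvli hev hE
  rw [hautus _ _ hPhiUnit]
  have hΨ : cpx (Matrix.diagonal δ ⊗ₖ sampB A B h) =
      cpx (Matrix.diagonal δ) ⊗ₖ cpx (sampB A B h) := cpx_kron _ _
  constructor
  · intro hPBH
    refine ⟨?_, ?_, ?_⟩
    · -- (1): PBH for (W, Δ)
      intro s u h1 h2
      by_contra hune
      have huW : u ᵥ* cpx W = s • u := by
        have h3 := congrArg (fun z => z + u ᵥ* cpx W) h1
        simpa [Matrix.vecMul_sub, vecMul_smulMat, Matrix.vecMul_one] using h3.symm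
      haveI : Nonempty (Fin N) := ⟨⟨0, hN⟩⟩
      have hcard : Fintype.card (Fin N) = Module.finrank ℂ (Fin N → ℂ) := by
        simp [Module.finrank_pi]
      let b := basisOfLinearIndependentOfCardEqFinrank hvli hcard
      have hbv : ⇑b = v := coe_basisOfLinearIndependentOfCardEqFinrank hvli hcard
      set c : Fin N → ℂ := fun k => b.repr u k with hc
      have hu : ∑ k, c k • v k = u := by
        rw [← hbv]
        exact b.sum_repr u
      have hck : ∀ k, c k * lam k = s * c k := by
        have hL : (∑ k, c k • v k) ᵥ* cpx W = ∑ k, (c k * lam k) • v k := by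
          rw [sum_vecMul']
          refine Finset.sum_congr rfl fun k _ => ?_
          rw [Matrix.smul_vecMul, hev k, smul_smul]
        rw [hu, huW] at hL
        have hR : s • u = ∑ k, (s * c k) • v k := by
          rw [← hu, Finset.smul_sum]
          exact Finset.sum_congr rfl fun k _ => smul_smul s (c k) (v k)
        have hdiff : ∑ k, (c k * lam k - s * c k) • v k = 0 := by
          have h4 : ∑ k, ((c k * lam k) • v k - (s * c k) • v k) = 0 := by
            rw [Finset.sum_sub_distrib, ← hL, ← hR, sub_self]
          simpa [sub_smul] using h4
        intro k
        exact sub_eq_zero.mp (Fintype.linearIndependent_iff.mp hvli _ hdiff k)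
      obtain ⟨k0, hk0⟩ : ∃ k, c k ≠ 0 := by
        by_contra hall
        push_neg at hall
        apply hune
        rw [← hu]
        simp [hall]
      obtain ⟨θ, ξ, hξne, hξeig⟩ := exists_left_eig hn (Emat A H C h s)
      have hfam : ∀ k, (c k • ξ) ᵥ* (θ • (1 : Matrix (Fin n) (Fin n) ℂ)
          - Emat A H C h (lam k)) = 0 := by
        intro k
        by_cases hck0 : c k = 0
        · rw [hck0, zero_smul, Matrix.zero_vecMul]
        · have hlk : lam k = s := mul_left_cancel₀ hck0 (by
            have h5 := hck k
            linear_combination h5)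
          rw [hlk, Matrix.smul_vecMul, hξeig, smul_zero]
      have hzd : ∀ q : Fin N × Fin n, u q.1 * ξ q.2 = ∑ k, v k q.1 * (c k • ξ) q.2 := by
        intro q
        rw [← hu]
        simp only [Finset.sum_apply, Pi.smul_apply, smul_eq_mul, Finset.sum_mul]
        exact Finset.sum_congr rfl fun k _ => by ring
      have hz1' : (fun q : Fin N × Fin n => u q.1 * ξ q.2) ᵥ*
          (θ • (1 : Matrix (Fin N × Fin n) (Fin N × Fin n) ℂ) - cpx (Phis A H C W h)) = 0 :=
        key_vecMul0 A H C W h v lam hev θ _ (fun k => c k • ξ) hzd hfam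
      have hz2 : (fun q : Fin N × Fin n => u q.1 * ξ q.2) ᵥ*
          cpx (Matrix.diagonal δ ⊗ₖ sampB A B h) = 0 := by
        rw [hΨ, vecMul_kron, h2]
        funext q
        simp
      have hz0 := hPBH θ _ hz1' hz2
      obtain ⟨i0, hi0⟩ := Function.ne_iff.mp hune
      obtain ⟨a0, ha0⟩ := Function.ne_iff.mp hξne
      have h6 := congrFun hz0 (i0, a0)
      simp only [Pi.zero_apply] at h6 hi0 ha0
      exact (mul_ne_zero hi0 ha0) h6
    · -- (2): PBH for each (E_{λ_i}, 𝓑)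
      intro i s ξ h1 h2
      have hfam : ∀ k, (if k = i then ξ else 0) ᵥ*
          (s • (1 : Matrix (Fin n) (Fin n) ℂ) - Emat A H C h (lam k)) = 0 := by
        intro k
        by_cases hk : k = i
        · subst hk
          rw [if_pos rfl]
          exact h1
        · rw [if_neg hk, Matrix.zero_vecMul]
      have hzd : ∀ q : Fin N × Fin n,
          v i q.1 * ξ q.2 = ∑ k, v k q.1 * (if k = i then ξ else 0) q.2 := by
        intro q
        rw [Finset.sum_eq_single i]
        · rw [if_pos rfl]
        · intro k _ hk
          rw [if_neg hk]
          simp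
        · intro hmem
          exact absurd (Finset.mem_univ _) hmem
      have hz1' : (fun q : Fin N × Fin n => v i q.1 * ξ q.2) ᵥ*
          (s • (1 : Matrix (Fin N × Fin n) (Fin N × Fin n) ℂ) - cpx (Phis A H C W h)) = 0 :=
        key_vecMul0 A H C W h v lam hev s _ (fun k => if k = i then ξ else 0) hzd hfam
      have hz2 : (fun q : Fin N × Fin n => v i q.1 * ξ q.2) ᵥ*
          cpx (Matrix.diagonal δ ⊗ₖ sampB A B h) = 0 := by
        rw [hΨ, vecMul_kron, h2]
        funext q
        simp
      have hz0 := hPBH s _ hz1' hz2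
      have hvine : v i ≠ 0 := hvli.ne_zero i
      obtain ⟨i0, hi0⟩ := Function.ne_iff.mp hvine
      funext a
      have h4 := congrFun hz0 (i0, a)
      simp only [Pi.zero_apply] at h4 hi0 ⊢
      rcases mul_eq_zero.mp h4 with h5 | h5
      · exact absurd h5 hi0
      · exact h5
    · -- (3)
      intro θ ξ hξ hex hcon
      have hz1' : (fun q : Fin N × Fin n => ∑ i, v i q.1 * ξ i q.2) ᵥ*
          (θ • (1 : Matrix (Fin N × Fin n) (Fin N × Fin n) ℂ) - cpx (Phis A H C W h)) = 0 :=
        key_vecMul0 A H C W h v lam hev θ _ ξ (fun q => rfl) hξ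
      have hz0 := hPBH θ _ hz1' hcon
      obtain ⟨k, hk⟩ := hex
      exact hk (indep_coords v hvli (η := ξ) hz0 k)
  · rintro ⟨h1, h2, h3⟩
    intro θ z hz1 hz2
    obtain ⟨ξ, hzd⟩ := exists_decomp v hN hvli z
    have hfam : ∀ k, ξ k ᵥ* (θ • (1 : Matrix (Fin n) (Fin n) ℂ) - Emat A H C h (lam k)) = 0 := by
      have h0 : (fun q : Fin N × Fin n => ∑ k, v k q.1 * ξ k q.2) ᵥ*
          (θ • (1 : Matrix (Fin N × Fin n) (Fin N × Fin n) ℂ) - cpx (Phis A H C W h)) = 0 := by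
        rw [← hzd]
        exact hz1
      rw [key_vecMul A H C W h v lam hev θ ξ] at h0
      exact indep_coords v hvli
        (η := fun k => ξ k ᵥ* (θ • (1 : Matrix (Fin n) (Fin n) ℂ) - Emat A H C h (lam k))) h0
    by_cases hall : ∀ k, ξ k = 0
    · rw [hzd]
      funext q
      simp [hall]
    · push_neg at hall
      exact absurd (by rw [← hzd]; exact hz2) (h3 θ ξ hfam hall)
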